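/- Let G : ℕ → ℝ satisfy G 0 = 0, G 1 = 1 and G (n+2) = 4·G (n+1) - G n for all n ≥ 0. Then for every n ≥ 1: -2√3/((2 + √3)^n - (2 - √3)^n) = -1/(G n); -1 - √3 + 2√3/(1 - (2 - √3)^(2n)) = -1 + G (2n)/(2·(G n)²); (n - 2 - √3)/2 + √3/(1 + (2 - √3)^n) = (n - 2)/2 + (G (2n) - 2·G n)/(4·(G n)²); and (n - 2 - √3)/2 + √3/(1 - (2 - √3)^n) = (n - 2)/2 + 3·(G n)²/(G (2n) - 2·G n). -/

import Mathlib

set_option maxHeartbeats 2000000 in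
theorem resistances_in_fibonacci_form (G : ℕ → ℝ) (hG0 : G 0 = 0) (hG1 : G 1 = 1)
    (hGrec : ∀ n : ℕ, G (n + 2) = 4 * G (n + 1) - G n) :
    ∀ n : ℕ, 1 ≤ n →
      (-2 * Real.sqrt 3 / ((2 + Real.sqrt 3) ^ n - (2 - Real.sqrt 3) ^ n) = -1 / G n) ∧
      (-1 - Real.sqrt 3 + 2 * Real.sqrt 3 / (1 - (2 - Real.sqrt 3) ^ (2 * n))
          = -1 + G (2 * n) / (2 * (G n) ^ 2)) ∧
      (((n : ℝ) - 2 - Real.sqrt 3) / 2 + Real.sqrt 3 / (1 + (2 - Real.sqrt 3) ^ n)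
          = ((n : ℝ) - 2) / 2 + (G (2 * n) - 2 * G n) / (4 * (G n) ^ 2)) ∧
      (((n : ℝ) - 2 - Real.sqrt 3) / 2 + Real.sqrt 3 / (1 - (2 - Real.sqrt 3) ^ n)
          = ((n : ℝ) - 2) / 2 + 3 * (G n) ^ 2 / (G (2 * n) - 2 * G n)) := by
  set s : ℝ := Real.sqrt 3 with hs
  have hs2 : s * s = 3 := Real.mul_self_sqrt (by norm_num)
  have hspos : 0 < s := Real.sqrt_pos.mpr (by norm_num)
  have hslt2 : s < 2 := by nlinarith
  have hs1 : 1 < s := by nlinarith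
  -- Binet formula
  have binet : ∀ n : ℕ, 2 * s * G n = (2 + s) ^ n - (2 - s) ^ n := by
    intro n
    induction n using Nat.strong_induction_on with
    | _ n ih =>
      match n with
      | 0 => simp [hG0]
      | 1 => simp [hG1]; ring
      | (n + 2) =>
        have h1 := ih (n + 1) (by omega)
        have h0 := ih n (by omega)
        rw [hGrec]
        have e1 : (2 + s) ^ (n + 2) = (2 + s) ^ n * ((2 + s) * (2 + s)) := by ring
        have e2 : (2 - s) ^ (n + 2) = (2 - s) ^ n * ((2 - s) * (2 - s)) := by ring
        rw [e1, e2]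
        have e3 : (2 + s) ^ (n + 1) = (2 + s) ^ n * (2 + s) := by ring
        have e4 : (2 - s) ^ (n + 1) = (2 - s) ^ n * (2 - s) := by ring
        rw [e3, e4] at h1
        linear_combination 4 * h1 - h0 + ((2 - s) ^ n - (2 + s) ^ n) * hs2
  intro n hn
  have ha : 2 * s * G n = (2 + s) ^ n - (2 - s) ^ n := binet n
  have hb : 2 * s * G (2 * n) = ((2 + s) ^ n) ^ 2 - ((2 - s) ^ n) ^ 2 := by
    rw [binet (2 * n), show 2 * n = n * 2 from by ring, pow_mul, pow_mul]
  set a : ℝ := (2 + s) ^ n with hadef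
  set b : ℝ := (2 - s) ^ n with hbdef
  have hab : a * b = 1 := by
    rw [hadef, hbdef, ← mul_pow]
    have : (2 + s) * (2 - s) = 1 := by nlinarith
    rw [this, one_pow]
  have hbpos : 0 < b := pow_pos (by linarith) n
  have hblt1 : b < 1 := by
    calc b ≤ (2 - s) ^ 1 := pow_le_pow_of_le_one (by linarith) (by linarith) hn
    _ = 2 - s := pow_one _
    _ < 1 := by linarith
  have hagt1 : 1 < a := by nlinarith [hab, hbpos, hblt1]
  have haneb : (0:ℝ) < a - b := by linarith
  have hGnpos : 0 < G n := by nlinarith [ha]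
  have hGnne : G n ≠ 0 := ne_of_gt hGnpos
  have hsne : s ≠ 0 := ne_of_gt hspos
  have hGn : G n = (a - b) / (2 * s) := by
    field_simp
    linear_combination ha
  have hG2n : G (2 * n) = (a ^ 2 - b ^ 2) / (2 * s) := by
    field_simp
    linear_combination hb
  have hb2n : (2 - s) ^ (2 * n) = b ^ 2 := by
    rw [show 2 * n = n * 2 from by ring, pow_mul, ← hbdef]
  have habne : a - b ≠ 0 := ne_of_gt haneb
  have h1b2 : (1:ℝ) - b ^ 2 ≠ 0 := by nlinarith
  have h1pb : (1:ℝ) + b ≠ 0 := by positivity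
  have h1mb : (1:ℝ) - b ≠ 0 := by nlinarith
  have hdiff : G (2 * n) - 2 * G n = (a - 1) * (1 - b) * (a - b) / (2 * s) := by
    rw [hGn, hG2n]
    field_simp
    linear_combination (a - b) * hab
  have hdiffpos : 0 < G (2 * n) - 2 * G n := by
    rw [hdiff]
    exact div_pos (mul_pos (mul_pos (by linarith) (by linarith)) haneb) (by positivity)
  have hdiffne : G (2 * n) - 2 * G n ≠ 0 := ne_of_gt hdiffpos
  refine ⟨?_, ?_, ?_, ?_⟩
  · rw [hGn]
    field_simp
  · rw [hb2n, hGn, hG2n]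
    field_simp
    ring_nf
    linear_combination (2 * s * b * (a - b)) * hab
  · rw [hGn, hG2n]
    field_simp
    ring_nf
    linear_combination (-8 * s * (a - b)) * hab
  · have ha1 : a - 1 ≠ 0 := ne_of_gt (by linarith)
    have key : s / (1 - b)
        = s / 2 + 3 * ((a - b) / (2 * s)) ^ 2 / ((a - 1) * (1 - b) * (a - b) / (2 * s)) := by
      rw [div_add_div _ _ two_ne_zero (by
        exact div_ne_zero (mul_ne_zero (mul_ne_zero ha1 h1mb) habne) (by positivity))]
      rw [div_eq_div_iff h1mb (by positivity)]
      field_simp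
      ring_nf
      linear_combination 3 * hab + ((a - 1) * (1 + b)) * hs2
    rw [hdiff, hGn]
    linear_combination key
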